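/- Let T be a finite tree (finite connected acyclic simple graph) with vertex set V and edge set E, let F be a field, and for each v ∈ V let M_v be an F-vector space and for each edge e = {u,v} let N_e be an F-vector space with surjective linear maps r_{v,e}: M_v → N_e for each endpoint v of e. Fix an orientation of each edge e (a choice of endpoints s(e), t(e)). Then the linear map ∏_{v∈V} M_v → ∏_{e∈E} N_e sending (m_v)_v to (r_{s(e),e}(m_{s(e)}) − r_{t(e),e}(m_{t(e)}))_e is surjective. -/

import Mathlib

open SimpleGraph

/-- In an acyclic graph, the endpoints of an edge are not reachable from each other
after deleting that edge. -/
private lemma no_reach_delete {V : Type*} {G : SimpleGraph V} (hA : G.IsAcyclic)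
    {s0 t0 : V} (hadj : G.Adj s0 t0)
    (h : (G.deleteEdges {Sym2.mk s0 t0}).Reachable s0 t0) : False := by
  classical
  obtain ⟨w⟩ := h
  have hsub : ∀ e ∈ ((w.reverse.toPath :
      (G.deleteEdges {Sym2.mk s0 t0}).Walk t0 s0)).edges, e ∈ G.edgeSet := by
    intro e he
    have h1 := Walk.edges_subset_edgeSet _ he
    rw [edgeSet_deleteEdges] at h1
    exact h1.1
  have hq : ((w.reverse.toPath :
      (G.deleteEdges {Sym2.mk s0 t0}).Walk t0 s0)).transfer G hsub |>.IsPath :=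
    (w.reverse.toPath.2).transfer hsub
  have he : ¬ Sym2.mk s0 t0 ∈
      (((w.reverse.toPath : (G.deleteEdges {Sym2.mk s0 t0}).Walk t0 s0)).transfer
        G hsub).edges := by
    intro hmem
    rw [Walk.edges_transfer] at hmem
    have h1 := Walk.edges_subset_edgeSet _ hmem
    rw [edgeSet_deleteEdges] at h1
    exact h1.2 rfl
  exact hA _ (Path.cons_isCycle ⟨_, hq⟩ hadj he)

/-- Deleting edges preserves acyclicity. -/
private lemma acyclic_delete {V : Type*} {G : SimpleGraph V} (hA : G.IsAcyclic)
    (s : Set (Sym2 V)) : (G.deleteEdges s).IsAcyclic := by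
  intro v c hc
  have hsub : ∀ e ∈ c.edges, e ∈ G.edgeSet := by
    intro e he
    have h1 := Walk.edges_subset_edgeSet _ he
    rw [edgeSet_deleteEdges] at h1
    exact h1.1
  exact hA (c.transfer G hsub) (hc.transfer hsub)

/-- Propagation lemma: on a finite acyclic graph, given a vertex `a` and `x : M a`,
there is a family `δ` with `δ a = x`, vanishing outside the component of `a`,
which is compatible at every edge. -/
private lemma cech_aux (F : Type*) [Field F] (n : ℕ) :
    ∀ {V : Type*} [Fintype V] (G : SimpleGraph V),
      G.edgeSet.ncard ≤ n → G.IsAcyclic →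
      ∀ (M : V → Type*) [∀ v, AddCommGroup (M v)] [∀ v, Module F (M v)]
        (N : G.edgeSet → Type*) [∀ e, AddCommGroup (N e)] [∀ e, Module F (N e)]
        (src tgt : G.edgeSet → V)
        (hst : ∀ e : G.edgeSet, (e : Sym2 V) = Sym2.mk (src e) (tgt e))
        (r : ∀ (e : G.edgeSet) (v : V), M v →ₗ[F] N e)
        (_hsrc : ∀ e, Function.Surjective (r e (src e)))
        (_htgt : ∀ e, Function.Surjective (r e (tgt e)))
        (a : V) (x : M a),
        ∃ δ : ∀ v, M v, δ a = x ∧ (∀ v, ¬ G.Reachable a v → δ v = 0) ∧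
          ∀ e : G.edgeSet, r e (src e) (δ (src e)) = r e (tgt e) (δ (tgt e)) := by
  induction n with
  | zero =>
    intro V _ G hcard hA M _ _ N _ _ src tgt hst r hsrc htgt a x
    classical
    have hfin : G.edgeSet.Finite := Set.toFinite _
    have hE : G.edgeSet = ∅ := by
      have := Set.ncard_eq_zero hfin |>.mp (Nat.le_zero.mp hcard)
      exact this
    refine ⟨Function.update (fun v => (0 : M v)) a x, ?_, ?_, ?_⟩
    · simp
    · intro v hv
      have hva : v ≠ a := by rintro rfl; exact hv (Reachable.refl v)
      simp [Function.update_of_ne hva]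
    · intro e
      obtain ⟨ev, hev⟩ := e
      rw [hE] at hev
      exact absurd hev (Set.notMem_empty _)
  | succ n ih =>
    intro V _ G hcard hA M _ _ N _ _ src tgt hst r hsrc htgt a x
    classical
    rcases Set.eq_empty_or_nonempty G.edgeSet with hE | ⟨e0v, he0⟩
    · -- no edges: same as base case
      refine ⟨Function.update (fun v => (0 : M v)) a x, ?_, ?_, ?_⟩
      · simp
      · intro v hv
        have hva : v ≠ a := by rintro rfl; exact hv (Reachable.refl v)
        simp [Function.update_of_ne hva]
      · intro e
        obtain ⟨ev, hev⟩ := e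
        rw [hE] at hev
        exact absurd hev (Set.notMem_empty _)
    · set e0 : G.edgeSet := ⟨e0v, he0⟩ with he0def
      set s0 := src e0 with hs0
      set t0 := tgt e0 with ht0
      have hadj : G.Adj s0 t0 := by
        have h1 : (e0 : Sym2 V) ∈ G.edgeSet := e0.2
        rw [hst e0] at h1
        exact (G.mem_edgeSet).mp h1
      set G' := G.deleteEdges {(e0 : Sym2 V)} with hG'def
      have hle : G' ≤ G := deleteEdges_le _
      have hE' : G'.edgeSet = G.edgeSet \ {(e0 : Sym2 V)} := edgeSet_deleteEdges _
      have hfin : G.edgeSet.Finite := Set.toFinite _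
      have hcard' : G'.edgeSet.ncard ≤ n := by
        have hlt : (G.edgeSet \ {(e0 : Sym2 V)}).ncard < G.edgeSet.ncard :=
          Set.ncard_diff_singleton_lt_of_mem he0 hfin
        rw [hE']
        omega
      have hA' : G'.IsAcyclic := acyclic_delete hA _
      have hnoreach : ¬ G'.Reachable s0 t0 := by
        intro h
        refine no_reach_delete hA hadj ?_
        rw [← hst e0]
        exact h
      -- transport data to G'
      have hmem : ∀ e : G'.edgeSet, (e : Sym2 V) ∈ G.edgeSet := by
        rintro ⟨ev, hev⟩
        rw [hE'] at hev
        exact hev.1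
      set ι : G'.edgeSet → G.edgeSet := fun e => ⟨e.1, hmem e⟩ with hιdef
      have key : ∀ (b : V) (y : M b),
          ∃ δ : ∀ v, M v, δ b = y ∧ (∀ v, ¬ G'.Reachable b v → δ v = 0) ∧
            ∀ e : G'.edgeSet, r (ι e) (src (ι e)) (δ (src (ι e))) =
              r (ι e) (tgt (ι e)) (δ (tgt (ι e))) := by
        intro b y
        exact ih G' hcard' hA' M (fun e => N (ι e))
          (fun e => src (ι e)) (fun e => tgt (ι e)) (fun e => hst (ι e))
          (fun e v => r (ι e) v) (fun e => hsrc (ι e)) (fun e => htgt (ι e)) b y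
      obtain ⟨δ', hδa, hδsupp, hδcomp⟩ := key a x
      have hcompat_ne : ∀ (ε : ∀ v, M v),
          (∀ e : G'.edgeSet, r (ι e) (src (ι e)) (ε (src (ι e))) =
            r (ι e) (tgt (ι e)) (ε (tgt (ι e)))) →
          ∀ e : G.edgeSet, e ≠ e0 →
            r e (src e) (ε (src e)) = r e (tgt e) (ε (tgt e)) := by
        intro ε hε e hne
        have hmem' : (e : Sym2 V) ∈ G'.edgeSet := by
          rw [hE']
          exact ⟨e.2, fun h => hne (Subtype.ext h)⟩
        have := hε ⟨e.1, hmem'⟩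
        have hιe : ι ⟨e.1, hmem'⟩ = e := Subtype.ext rfl
        rwa [hιe] at this
      by_cases h1 : G'.Reachable a s0 <;> by_cases h2 : G'.Reachable a t0
      · exact absurd (h1.symm.trans h2) hnoreach
      · -- a reaches s0, not t0
        obtain ⟨z, hz⟩ := htgt e0 (r e0 s0 (δ' s0))
        obtain ⟨ε, hεa, hεsupp, hεcomp⟩ := key t0 z
        have hεs0 : ε s0 = 0 := hεsupp s0 (fun h => hnoreach h.symm)
        have hεA : ε a = 0 := hεsupp a (fun h => h2 h.symm)
        have hδt0 : δ' t0 = 0 := hδsupp t0 h2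
        refine ⟨fun v => δ' v + ε v, ?_, ?_, ?_⟩
        · show δ' a + ε a = x
          rw [hδa, hεA, add_zero]
        · intro v hv
          show δ' v + ε v = 0
          have hd : δ' v = 0 := hδsupp v (fun h => hv (h.mono hle))
          have he : ε v = 0 := hεsupp v (fun h =>
            hv (((h1.mono hle).trans hadj.reachable).trans (h.mono hle)))
          rw [hd, he, add_zero]
        · intro e
          by_cases hne : e = e0
          · subst hne
            show r e0 (src e0) (δ' (src e0) + ε (src e0)) =
              r e0 (tgt e0) (δ' (tgt e0) + ε (tgt e0))
            rw [← hs0, ← ht0, hεs0, hδt0, add_zero, zero_add, hεa]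
            exact hz.symm
          · show r e (src e) (δ' (src e) + ε (src e)) =
              r e (tgt e) (δ' (tgt e) + ε (tgt e))
            rw [map_add, map_add, hcompat_ne δ' hδcomp e hne, hcompat_ne ε hεcomp e hne]
      · -- a reaches t0, not s0
        obtain ⟨z, hz⟩ := hsrc e0 (r e0 t0 (δ' t0))
        obtain ⟨ε, hεa, hεsupp, hεcomp⟩ := key s0 z
        have hεt0 : ε t0 = 0 := hεsupp t0 hnoreach
        have hεA : ε a = 0 := hεsupp a (fun h => h1 h.symm)
        have hδs0 : δ' s0 = 0 := hδsupp s0 h1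
        refine ⟨fun v => δ' v + ε v, ?_, ?_, ?_⟩
        · show δ' a + ε a = x
          rw [hδa, hεA, add_zero]
        · intro v hv
          show δ' v + ε v = 0
          have hd : δ' v = 0 := hδsupp v (fun h => hv (h.mono hle))
          have he : ε v = 0 := hεsupp v (fun h =>
            hv (((h2.mono hle).trans hadj.symm.reachable).trans (h.mono hle)))
          rw [hd, he, add_zero]
        · intro e
          by_cases hne : e = e0
          · subst hne
            show r e0 (src e0) (δ' (src e0) + ε (src e0)) =
              r e0 (tgt e0) (δ' (tgt e0) + ε (tgt e0))
            rw [← hs0, ← ht0, hεt0, hδs0, add_zero, zero_add, hεa]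
            exact hz
          · show r e (src e) (δ' (src e) + ε (src e)) =
              r e (tgt e) (δ' (tgt e) + ε (tgt e))
            rw [map_add, map_add, hcompat_ne δ' hδcomp e hne, hcompat_ne ε hεcomp e hne]
      · -- a reaches neither
        have hδs0 : δ' s0 = 0 := hδsupp s0 h1
        have hδt0 : δ' t0 = 0 := hδsupp t0 h2
        refine ⟨δ', hδa, ?_, ?_⟩
        · intro v hv
          exact hδsupp v (fun h => hv (h.mono hle))
        · intro e
          by_cases hne : e = e0
          · subst hne
            show r e0 (src e0) (δ' (src e0)) = r e0 (tgt e0) (δ' (tgt e0))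
            rw [← hs0, ← ht0, hδs0, hδt0, map_zero, map_zero]
          · exact hcompat_ne δ' hδcomp e hne

/-- Let `T` be a finite tree with vector spaces `M v` at the vertices and `N e` at the
edges, together with surjective linear restriction maps `M v → N e` for each endpoint
`v` of each edge `e` (here each edge `e` comes with an orientation `src e, tgt e`).
Then the Čech differential `∏_v M v → ∏_e N e`,
`(m_v)_v ↦ (r_{src e}(m_{src e}) - r_{tgt e}(m_{tgt e}))_e`, is surjective. -/
theorem tree_cech_surjective {V : Type*} [Fintype V] (G : SimpleGraph V)
    (hT : G.IsTree) (F : Type*) [Field F]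
    (M : V → Type*) [∀ v, AddCommGroup (M v)] [∀ v, Module F (M v)]
    (N : G.edgeSet → Type*) [∀ e, AddCommGroup (N e)] [∀ e, Module F (N e)]
    (src tgt : G.edgeSet → V)
    (hst : ∀ e : G.edgeSet, (e : Sym2 V) = Sym2.mk (src e) (tgt e))
    (r : ∀ (e : G.edgeSet) (v : V), M v →ₗ[F] N e)
    (hsrc : ∀ e, Function.Surjective (r e (src e)))
    (htgt : ∀ e, Function.Surjective (r e (tgt e))) :
    Function.Surjective (fun m : (∀ v, M v) => fun e : G.edgeSet =>
      r e (src e) (m (src e)) - r e (tgt e) (m (tgt e))) := by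
  classical
  have hA := hT.2
  haveI : Fintype G.edgeSet := Fintype.ofFinite _
  -- hit `Pi.single e0 c`
  have key : ∀ (e0 : G.edgeSet) (c : N e0), ∃ m : ∀ v, M v,
      ∀ e : G.edgeSet, r e (src e) (m (src e)) - r e (tgt e) (m (tgt e)) =
        Pi.single e0 c e := by
    intro e0 c
    set s0 := src e0 with hs0
    set t0 := tgt e0 with ht0
    have hadj : G.Adj s0 t0 := by
      have h1 : (e0 : Sym2 V) ∈ G.edgeSet := e0.2
      rw [hst e0] at h1
      exact (G.mem_edgeSet).mp h1
    set G' := G.deleteEdges {(e0 : Sym2 V)} with hG'def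
    have hle : G' ≤ G := deleteEdges_le _
    have hE' : G'.edgeSet = G.edgeSet \ {(e0 : Sym2 V)} := edgeSet_deleteEdges _
    have hA' : G'.IsAcyclic := acyclic_delete hA _
    have hnoreach : ¬ G'.Reachable s0 t0 := by
      intro h
      refine no_reach_delete hA hadj ?_
      rw [← hst e0]
      exact h
    have hmem : ∀ e : G'.edgeSet, (e : Sym2 V) ∈ G.edgeSet := by
      rintro ⟨ev, hev⟩
      rw [hE'] at hev
      exact hev.1
    set ι : G'.edgeSet → G.edgeSet := fun e => ⟨e.1, hmem e⟩ with hιdef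
    obtain ⟨x, hx⟩ := hsrc e0 c
    obtain ⟨δ, hδa, hδsupp, hδcomp⟩ := cech_aux F G'.edgeSet.ncard G' le_rfl hA' M
      (fun e => N (ι e)) (fun e => src (ι e)) (fun e => tgt (ι e))
      (fun e => hst (ι e)) (fun e v => r (ι e) v)
      (fun e => hsrc (ι e)) (fun e => htgt (ι e)) s0 x
    have hδt0 : δ t0 = 0 := hδsupp t0 hnoreach
    refine ⟨δ, ?_⟩
    intro e
    by_cases hne : e = e0
    · subst hne
      rw [← hs0, ← ht0, hδa, hδt0, map_zero, sub_zero, hx, Pi.single_eq_same]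
    · have hmem' : (e : Sym2 V) ∈ G'.edgeSet := by
        rw [hE']
        exact ⟨e.2, fun h => hne (Subtype.ext h)⟩
      have hcomp := hδcomp ⟨e.1, hmem'⟩
      have hιe : ι ⟨e.1, hmem'⟩ = e := Subtype.ext rfl
      rw [hιe] at hcomp
      rw [hcomp, sub_self, Pi.single_eq_of_ne hne]
  intro n
  have hsum : ∀ s : Finset G.edgeSet, ∃ m : ∀ v, M v,
      ∀ e : G.edgeSet, r e (src e) (m (src e)) - r e (tgt e) (m (tgt e)) =
        (∑ e' ∈ s, Pi.single e' (n e')) e := by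
    intro s
    induction s using Finset.induction with
    | empty =>
      refine ⟨0, fun e => ?_⟩
      simp
    | @insert e0 s hnot ih =>
      obtain ⟨m1, hm1⟩ := ih
      obtain ⟨m2, hm2⟩ := key e0 (n e0)
      refine ⟨fun v => m1 v + m2 v, fun e => ?_⟩
      show r e (src e) (m1 (src e) + m2 (src e)) -
        r e (tgt e) (m1 (tgt e) + m2 (tgt e)) = _
      have : r e (src e) (m1 (src e) + m2 (src e)) -
          r e (tgt e) (m1 (tgt e) + m2 (tgt e)) =
          (r e (src e) (m1 (src e)) - r e (tgt e) (m1 (tgt e))) +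
          (r e (src e) (m2 (src e)) - r e (tgt e) (m2 (tgt e))) := by
        rw [map_add, map_add]; abel
      rw [this, hm1 e, hm2 e, Finset.sum_insert hnot]
      simp [add_comm]
  obtain ⟨m, hm⟩ := hsum Finset.univ
  refine ⟨m, ?_⟩
  funext e
  show r e (src e) (m (src e)) - r e (tgt e) (m (tgt e)) = n e
  rw [hm e, Finset.univ_sum_single]
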